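/- Let G be a finite group, p a prime, and D an abelian radical p-subgroup of G with subgroups D_i ≤ D. If C_G(D) = C_G(D_i), then N_G(D) = N_G(D_i) for all such i satisfying D_i ≤ D. -/

import Mathlib

/-- The subgroup of `G` generated by all subgroups of `N` that are `p`-groups and
are normalized by `N`, i.e. `O_p(N)`, the largest normal `p`-subgroup of `N`. -/
def relPCore (p : ℕ) {G : Type*} [Group G] (N : Subgroup G) : Subgroup G :=
  sSup {Q : Subgroup G | Q ≤ N ∧ IsPGroup p Q ∧ ∀ n ∈ N, ∀ x ∈ Q, n * x * n⁻¹ ∈ Q}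

section Aux

variable {G : Type*} [Group G] (p : ℕ)

/-- The defining family of `relPCore`. -/
def relPCoreSet (N : Subgroup G) : Set (Subgroup G) :=
  {Q : Subgroup G | Q ≤ N ∧ IsPGroup p Q ∧ ∀ n ∈ N, ∀ x ∈ Q, n * x * n⁻¹ ∈ Q}

lemma relPCore_eq_sSup (N : Subgroup G) : relPCore p N = sSup (relPCoreSet p N) := rfl

/-- Conjugating a member of the defining family by `g` gives a member of the defining
family for the conjugated group. -/
lemma conj_mem_relPCoreSet {N Q : Subgroup G} (hQ : Q ∈ relPCoreSet p N) (g : G) :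
    Subgroup.map (MulAut.conj g).toMonoidHom Q ∈
      relPCoreSet p (Subgroup.map (MulAut.conj g).toMonoidHom N) := by
  obtain ⟨hle, hpg, hnorm⟩ := hQ
  refine ⟨Subgroup.map_mono hle, hpg.map _, ?_⟩
  rintro n hn x hx
  rw [Subgroup.mem_map] at hn hx
  obtain ⟨c, hc, rfl⟩ := hn
  obtain ⟨q, hq, rfl⟩ := hx
  rw [Subgroup.mem_map]
  refine ⟨c * q * c⁻¹, hnorm c hc q hq, ?_⟩
  simp [MulAut.conj_apply]
  group

/-- `relPCore` is "sub-equivariant" under conjugation. -/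
lemma map_relPCore_le (N : Subgroup G) (g : G) :
    Subgroup.map (MulAut.conj g).toMonoidHom (relPCore p N) ≤
      relPCore p (Subgroup.map (MulAut.conj g).toMonoidHom N) := by
  rw [relPCore_eq_sSup, (Subgroup.gc_map_comap _).l_sSup]
  exact iSup₂_le fun Q hQ => le_sSup (conj_mem_relPCoreSet p hQ g)

lemma relPCore_mem_relPCoreSet [Finite G] (N : Subgroup G) :
    relPCore p N ∈ relPCoreSet p N := by
  have hfin : (relPCoreSet p N).Finite := Set.toFinite _
  have heq : relPCore p N = hfin.toFinset.sup id := by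
    rw [Finset.sup_id_eq_sSup, hfin.coe_toFinset, relPCore_eq_sSup]
  rw [heq]
  refine Finset.sup_induction ?_ ?_ ?_
  · exact ⟨bot_le, IsPGroup.of_bot, by simp⟩
  · rintro Q1 ⟨h1le, h1p, h1n⟩ Q2 ⟨h2le, h2p, h2n⟩
    have hN2 : N ≤ Subgroup.normalizer (Q2 : Set G) := by
      intro n hn
      rw [Subgroup.mem_normalizer_iff]
      intro x
      constructor
      · exact h2n n hn x
      · intro hx
        have := h2n n⁻¹ (inv_mem hn) _ hx
        rwa [show n⁻¹ * (n * x * n⁻¹) * n⁻¹⁻¹ = x from by group] at this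
    refine ⟨sup_le h1le h2le, h1p.to_sup_of_normal_right' h2p (h1le.trans hN2), ?_⟩
    intro n hn x hx
    have hmap : Subgroup.map (MulAut.conj n).toMonoidHom (Q1 ⊔ Q2) ≤ Q1 ⊔ Q2 := by
      rw [Subgroup.map_sup]
      refine sup_le (le_trans ?_ le_sup_left) (le_trans ?_ le_sup_right)
      · rintro y hy
        rw [Subgroup.mem_map] at hy
        obtain ⟨q, hq, rfl⟩ := hy
        exact h1n n hn q hq
      · rintro y hy
        rw [Subgroup.mem_map] at hy
        obtain ⟨q, hq, rfl⟩ := hy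
        exact h2n n hn q hq
    exact hmap (Subgroup.mem_map.mpr ⟨x, hx, rfl⟩)
  · intro Q hQ
    simpa using hfin.mem_toFinset.mp hQ

/-- Conjugation by a normalizing element preserves the centralizer. -/
lemma conj_mem_centralizer {H : Subgroup G} {g : G} (hg : g ∈ Subgroup.normalizer (H : Set G)) {c : G}
    (hc : c ∈ Subgroup.centralizer (H : Set G)) :
    g * c * g⁻¹ ∈ Subgroup.centralizer (H : Set G) := by
  rw [Subgroup.mem_centralizer_iff] at hc ⊢
  intro x hx
  have hx' : g⁻¹ * x * g ∈ H := by
    have := (Subgroup.mem_normalizer_iff.mp (inv_mem hg) x).mp hx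
    simpa using this
  have hcomm := hc (g⁻¹ * x * g) hx'
  calc x * (g * c * g⁻¹) = g * ((g⁻¹ * x * g) * c) * g⁻¹ := by group
    _ = g * (c * (g⁻¹ * x * g)) * g⁻¹ := by rw [hcomm]
    _ = g * c * g⁻¹ * x := by group

lemma map_centralizer_eq {H : Subgroup G} {g : G} (hg : g ∈ Subgroup.normalizer (H : Set G)) :
    Subgroup.map (MulAut.conj g).toMonoidHom (Subgroup.centralizer (H : Set G)) =
      Subgroup.centralizer (H : Set G) := by
  apply le_antisymm
  · rintro y hy
    rw [Subgroup.mem_map] at hy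
    obtain ⟨c, hc, rfl⟩ := hy
    exact conj_mem_centralizer hg hc
  · intro c hc
    rw [Subgroup.mem_map]
    refine ⟨g⁻¹ * c * g, ?_, by simp [MulAut.conj_apply]; group⟩
    have := conj_mem_centralizer (inv_mem hg) hc
    simpa using this

end Aux

/-- Let `D` be an abelian radical `p`-subgroup of the finite group `G` and let `Dᵢ ≤ D`
be a subgroup which is characteristic in `D` (as for the subgroups of a cyclic group;
equivalently, invariant under conjugation by `N_G(D)`). If `C_G(D) = C_G(Dᵢ)`, then
`N_G(D) = N_G(Dᵢ)`. -/
theorem stmt15 {G : Type*} [Group G] [Finite G] (p : ℕ) (hp : p.Prime)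
    (D : Subgroup G) (hD : IsPGroup p D)
    (hab : ∀ x ∈ D, ∀ y ∈ D, x * y = y * x)
    (hrad : relPCore p (Subgroup.normalizer (D : Set G)) = D)
    (Di : Subgroup G) (hDile : Di ≤ D)
    (hchar : ∀ g ∈ Subgroup.normalizer (D : Set G), ∀ x ∈ Di, g * x * g⁻¹ ∈ Di)
    (h : Subgroup.centralizer (D : Set G) = Subgroup.centralizer (Di : Set G)) :
    Subgroup.normalizer (D : Set G) = Subgroup.normalizer (Di : Set G) := by
  set C := Subgroup.centralizer (D : Set G) with hC
  -- C ≤ N_G(D)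
  have hfix : ∀ c ∈ C, ∀ y ∈ D, c * y * c⁻¹ ∈ D := by
    intro c hc y hy
    have h1 := (Subgroup.mem_centralizer_iff.mp hc) y hy
    have h2 : c * y * c⁻¹ = y := by rw [← h1]; group
    rw [h2]; exact hy
  have hCN : C ≤ Subgroup.normalizer (D : Set G) := by
    intro c hc
    rw [Subgroup.mem_normalizer_iff]
    intro x
    constructor
    · exact hfix c hc x
    · intro hx
      have := hfix c⁻¹ (inv_mem hc) _ hx
      rwa [show c⁻¹ * (c * x * c⁻¹) * c⁻¹⁻¹ = x from by group] at this
  -- D = relPCore p C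
  have hDC : D = relPCore p C := by
    apply le_antisymm
    · apply le_sSup
      refine ⟨?_, hD, ?_⟩
      · intro x hx
        rw [Subgroup.mem_centralizer_iff]
        intro y hy
        exact hab y hy x hx
      · intro c hc x hx
        have := (Subgroup.mem_centralizer_iff.mp hc) x hx
        have hcx : c * x * c⁻¹ = x := by rw [← this]; group
        rw [hcx]; exact hx
    · -- relPCore p C is a member of relPCoreSet p D.normalizer
      rw [← hrad]
      apply le_sSup
      obtain ⟨hKC, hKp, hKn⟩ := relPCore_mem_relPCoreSet p C
      refine ⟨hKC.trans hCN, hKp, ?_⟩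
      intro n hn x hx
      have hmap := map_relPCore_le p C n
      rw [map_centralizer_eq hn] at hmap
      exact hmap (Subgroup.mem_map.mpr ⟨x, hx, rfl⟩)
  -- key: any element normalizing Di sends D into D
  have key : ∀ g ∈ Subgroup.normalizer (Di : Set G), ∀ x ∈ D, g * x * g⁻¹ ∈ D := by
    intro g hg x hx
    have hgC : Subgroup.map (MulAut.conj g).toMonoidHom C = C := by
      rw [h]; exact map_centralizer_eq hg
    have hmap := map_relPCore_le p C g
    rw [hgC, ← hDC] at hmap
    exact hmap (Subgroup.mem_map.mpr ⟨x, hx, rfl⟩)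
  apply le_antisymm
  · intro n hn
    rw [Subgroup.mem_normalizer_iff]
    intro x
    constructor
    · exact hchar n hn x
    · intro hx
      have := hchar n⁻¹ (inv_mem hn) _ hx
      rwa [show n⁻¹ * (n * x * n⁻¹) * n⁻¹⁻¹ = x from by group] at this
  · intro g hg
    rw [Subgroup.mem_normalizer_iff]
    intro x
    constructor
    · exact key g hg x
    · intro hx
      have := key g⁻¹ (inv_mem hg) _ hx
      rwa [show g⁻¹ * (g * x * g⁻¹) * g⁻¹⁻¹ = x from by group] at this
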